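/- For the cycle C_n on n ≥ 3 vertices, L⊠_V(C_n)=L×_V(C_n)=n. -/

import Mathlib

open SimpleGraph
open scoped Fin.NatCast Fin.IntCast Fin.CommRing

/-- An `l`-track on `G`: a surjective function whose consecutive values are adjacent. -/
def IsTrack {V : Type*} (G : SimpleGraph V) {l : ℕ} (f : Fin l → V) : Prop :=
  Function.Surjective f ∧
    ∀ i : ℕ, ∀ hi : i + 1 < l, G.Adj (f ⟨i, Nat.lt_of_succ_lt hi⟩) (f ⟨i + 1, hi⟩)

/-- A lazy `l`-track on `G`: consecutive values are adjacent or equal. -/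
def IsLazyTrack {V : Type*} (G : SimpleGraph V) {l : ℕ} (f : Fin l → V) : Prop :=
  Function.Surjective f ∧
    ∀ i : ℕ, ∀ hi : i + 1 < l,
      G.Adj (f ⟨i, Nat.lt_of_succ_lt hi⟩) (f ⟨i + 1, hi⟩) ∨
        f ⟨i, Nat.lt_of_succ_lt hi⟩ = f ⟨i + 1, hi⟩

/-- The condition that every edge of `G` is traversed by `f`. -/
def SweepCond {V : Type*} (G : SimpleGraph V) {l : ℕ} (f : Fin l → V) : Prop :=
  ∀ e ∈ G.edgeSet, ∃ i : ℕ, ∃ hi : i + 1 < l,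
    e = s(f ⟨i, Nat.lt_of_succ_lt hi⟩, f ⟨i + 1, hi⟩)

/-- An `l`-sweep on `G`: an `l`-track traversing every edge. -/
def IsSweep {V : Type*} (G : SimpleGraph V) {l : ℕ} (f : Fin l → V) : Prop :=
  IsTrack G f ∧ SweepCond G f

/-- A lazy `l`-sweep on `G`: a lazy `l`-track traversing every edge. -/
def IsLazySweep {V : Type*} (G : SimpleGraph V) {l : ℕ} (f : Fin l → V) : Prop :=
  IsLazyTrack G f ∧ SweepCond G f

/-- `f` and `g` are opposite: at each step exactly `f` moves iff `g` stays. -/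
def IsOpposite {V : Type*} (G : SimpleGraph V) {l : ℕ} (f g : Fin l → V) : Prop :=
  ∀ i : ℕ, ∀ hi : i + 1 < l,
    (G.Adj (f ⟨i, Nat.lt_of_succ_lt hi⟩) (f ⟨i + 1, hi⟩) ↔
      g ⟨i, Nat.lt_of_succ_lt hi⟩ = g ⟨i + 1, hi⟩)

/-- The distance `m_G(f,g)`: minimal distance between simultaneous positions. -/
noncomputable def mDist {V : Type*} (G : SimpleGraph V) {l : ℕ} (f g : Fin l → V) : ℕ :=
  sInf {d | ∃ i : Fin l, G.dist (f i) (g i) = d}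

/-- Strong vertex span `σ⊠_V(G)`. -/
noncomputable def strongVertexSpan {V : Type*} (G : SimpleGraph V) : ℕ :=
  sSup {d | ∃ (l : ℕ) (f g : Fin l → V), IsLazyTrack G f ∧ IsLazyTrack G g ∧ mDist G f g = d}

/-- Direct vertex span `σ×_V(G)`. -/
noncomputable def directVertexSpan {V : Type*} (G : SimpleGraph V) : ℕ :=
  sSup {d | ∃ (l : ℕ) (f g : Fin l → V), IsTrack G f ∧ IsTrack G g ∧ mDist G f g = d}

/-- Cartesian vertex span `σ□_V(G)`. -/
noncomputable def cartesianVertexSpan {V : Type*} (G : SimpleGraph V) : ℕ :=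
  sSup {d | ∃ (l : ℕ) (f g : Fin l → V),
    IsLazyTrack G f ∧ IsLazyTrack G g ∧ IsOpposite G f g ∧ mDist G f g = d}

/-- Strong edge span `σ⊠_E(G)`. -/
noncomputable def strongEdgeSpan {V : Type*} (G : SimpleGraph V) : ℕ :=
  sSup {d | ∃ (l : ℕ) (f g : Fin l → V), IsLazySweep G f ∧ IsLazySweep G g ∧ mDist G f g = d}

/-- Direct edge span `σ×_E(G)`. -/
noncomputable def directEdgeSpan {V : Type*} (G : SimpleGraph V) : ℕ :=
  sSup {d | ∃ (l : ℕ) (f g : Fin l → V), IsSweep G f ∧ IsSweep G g ∧ mDist G f g = d}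

/-- Cartesian edge span `σ□_E(G)`. -/
noncomputable def cartesianEdgeSpan {V : Type*} (G : SimpleGraph V) : ℕ :=
  sSup {d | ∃ (l : ℕ) (f g : Fin l → V),
    IsLazySweep G f ∧ IsLazySweep G g ∧ IsOpposite G f g ∧ mDist G f g = d}

/-- `L⊠_V(G)`: minimal length of lazy tracks realizing the strong vertex span. -/
noncomputable def strongVertexL {V : Type*} (G : SimpleGraph V) : ℕ :=
  sInf {l | ∃ f g : Fin l → V,
    IsLazyTrack G f ∧ IsLazyTrack G g ∧ mDist G f g = strongVertexSpan G}

/-- `L×_V(G)`. -/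
noncomputable def directVertexL {V : Type*} (G : SimpleGraph V) : ℕ :=
  sInf {l | ∃ f g : Fin l → V,
    IsTrack G f ∧ IsTrack G g ∧ mDist G f g = directVertexSpan G}

/-- `L□_V(G)`. -/
noncomputable def cartesianVertexL {V : Type*} (G : SimpleGraph V) : ℕ :=
  sInf {l | ∃ f g : Fin l → V,
    IsLazyTrack G f ∧ IsLazyTrack G g ∧ IsOpposite G f g ∧ mDist G f g = cartesianVertexSpan G}

/-- `L⊠_E(G)`. -/
noncomputable def strongEdgeL {V : Type*} (G : SimpleGraph V) : ℕ :=
  sInf {l | ∃ f g : Fin l → V,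
    IsLazySweep G f ∧ IsLazySweep G g ∧ mDist G f g = strongEdgeSpan G}

/-- `L×_E(G)`. -/
noncomputable def directEdgeL {V : Type*} (G : SimpleGraph V) : ℕ :=
  sInf {l | ∃ f g : Fin l → V,
    IsSweep G f ∧ IsSweep G g ∧ mDist G f g = directEdgeSpan G}

/-- `L□_E(G)`. -/
noncomputable def cartesianEdgeL {V : Type*} (G : SimpleGraph V) : ℕ :=
  sInf {l | ∃ f g : Fin l → V,
    IsLazySweep G f ∧ IsLazySweep G g ∧ IsOpposite G f g ∧ mDist G f g = cartesianEdgeSpan G}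

lemma fin_val_neg {n : ℕ} (x : Fin (n+3)) : (-x).val = (n + 3 - x.val) % (n+3) := by
  have h : (-x) = 0 - x := (zero_sub x).symm
  rw [h, Fin.sub_def]
  simp

lemma min_neg_eq {n : ℕ} (x : Fin (n+3)) :
    min x.val (-x).val = min x.val (n + 3 - x.val) := by
  rw [fin_val_neg]
  rcases eq_or_ne x.val 0 with h | h
  · simp [h]
  · have hx := x.isLt
    rw [Nat.mod_eq_of_lt (by omega)]

lemma fin_val_add_one {n : ℕ} (y : Fin (n+3)) : (y + 1).val = (y.val + 1 % (n+3)) % (n+3) := by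
  rw [Fin.add_def]
  rfl

lemma step1 {n : ℕ} (y : Fin (n+3)) :
    min (y+1).val (-(y+1)).val ≤ min y.val (-y).val + 1 := by
  rw [min_neg_eq, min_neg_eq, fin_val_add_one]
  have hy := y.isLt
  have h1 : 1 % (n+3) = 1 := Nat.mod_eq_of_lt (by omega)
  rw [h1]
  rcases Nat.lt_or_ge (y.val + 1) (n+3) with h | h
  · rw [Nat.mod_eq_of_lt h]; omega
  · have he : y.val + 1 = n+3 := by omega
    rw [he, Nat.mod_self]; omega

lemma step2 {n : ℕ} (y : Fin (n+3)) :
    min y.val (-y).val ≤ min (y+1).val (-(y+1)).val + 1 := by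
  rw [min_neg_eq, min_neg_eq, fin_val_add_one]
  have hy := y.isLt
  have h1 : 1 % (n+3) = 1 := Nat.mod_eq_of_lt (by omega)
  rw [h1]
  rcases Nat.lt_or_ge (y.val + 1) (n+3) with h | h
  · rw [Nat.mod_eq_of_lt h]; omega
  · have he : y.val + 1 = n+3 := by omega
    rw [he, Nat.mod_self]; omega

lemma fin_one_val {n : ℕ} : (1 : Fin (n+3)).val = 1 := by
  simp [Fin.val_one]

lemma walk_lower {n : ℕ} {u v : Fin (n+3)} (w : (cycleGraph (n+3)).Walk u v) :
    min (v - u).val (-(v - u)).val ≤ w.length := by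
  induction w with
  | nil => simp
  | @cons u b v h p ih =>
    rw [Walk.length_cons]
    rcases cycleGraph_adj'.mp h with h1 | h1
    · have hub : u - b = 1 := Fin.ext (by rw [h1, fin_one_val])
      have hv : (v - b) = (v - u) + 1 := by rw [← hub]; ring
      rw [hv] at ih
      have := step2 (v - u)
      omega
    · have hbu : b - u = 1 := Fin.ext (by rw [h1, fin_one_val])
      have hv : (v - u) = (v - b) + 1 := by rw [← hbu]; ring
      rw [hv]
      have := step1 (v - b)
      omega

lemma adj_add_one {m : ℕ} (x : Fin (m+3)) : (cycleGraph (m+3)).Adj x (x+1) := by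
  rw [cycleGraph_adj']
  right
  rw [add_sub_cancel_left, fin_one_val]

lemma dist_add_le (m : ℕ) (u : Fin (m+3)) (k : ℕ) :
    (cycleGraph (m+3)).dist u (u + (k : Fin (m+3))) ≤ k := by
  induction k with
  | zero => simp
  | succ k ih =>
    have h1 : ((k+1 : ℕ) : Fin (m+3)) = (k : Fin (m+3)) + 1 := by push_cast; ring
    rw [h1, ← add_assoc]
    calc (cycleGraph (m+3)).dist u (u + (k : Fin (m+3)) + 1)
        ≤ (cycleGraph (m+3)).dist u (u + (k : Fin (m+3))) +
          (cycleGraph (m+3)).dist (u + (k : Fin (m+3))) (u + (k : Fin (m+3)) + 1) :=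
          cycleGraph_connected.dist_triangle
      _ ≤ k + 1 := by
          have h2 : (cycleGraph (m+3)).dist (u + (k : Fin (m+3))) (u + (k : Fin (m+3)) + 1) = 1 :=
            dist_eq_one_iff_adj.mpr (adj_add_one _)
          omega

lemma dist_le_sub (m : ℕ) (u v : Fin (m+3)) :
    (cycleGraph (m+3)).dist u v ≤ (v - u).val := by
  have h : u + (((v - u).val : ℕ) : Fin (m+3)) = v := by
    rw [Fin.cast_val_eq_self]; ring
  calc (cycleGraph (m+3)).dist u v
      = (cycleGraph (m+3)).dist u (u + (((v - u).val : ℕ) : Fin (m+3))) := by rw [h]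
    _ ≤ (v - u).val := dist_add_le m u _

lemma cyc_dist_eq (m : ℕ) (u v : Fin (m+3)) :
    (cycleGraph (m+3)).dist u v = min (v - u).val (-(v - u)).val := by
  apply le_antisymm
  · apply le_min (dist_le_sub m u v)
    rw [neg_sub, dist_comm]
    exact dist_le_sub m v u
  · obtain ⟨p, hp⟩ := cycleGraph_connected.exists_walk_length_eq_dist u v
    rw [← hp]
    exact walk_lower p

lemma dist_le_half (m : ℕ) (u v : Fin (m+3)) :
    (cycleGraph (m+3)).dist u v ≤ (m+3)/2 := by
  rw [cyc_dist_eq, min_neg_eq]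
  have := (v - u).isLt
  omega

lemma dist_shift (m : ℕ) (i : Fin (m+3)) :
    (cycleGraph (m+3)).dist i (i + (((m+3)/2 : ℕ) : Fin (m+3))) = (m+3)/2 := by
  rw [cyc_dist_eq, add_sub_cancel_left, min_neg_eq]
  have h1 : ((((m+3)/2 : ℕ)) : Fin (m+3)).val = (m+3)/2 := by
    rw [Fin.val_natCast, Nat.mod_eq_of_lt (by omega)]
  rw [h1]
  omega

-- witness tracks
lemma track_id (m : ℕ) : IsTrack (cycleGraph (m+3)) (id : Fin (m+3) → Fin (m+3)) := by
  refine ⟨Function.surjective_id, fun i hi => ?_⟩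
  have h : (⟨i + 1, hi⟩ : Fin (m+3)) = ⟨i, Nat.lt_of_succ_lt hi⟩ + 1 := by
    apply Fin.ext
    rw [Fin.add_def, fin_one_val]
    simpa using (Nat.mod_eq_of_lt hi).symm
  simp only [id]
  rw [h]
  exact adj_add_one _

lemma track_shift (m : ℕ) :
    IsTrack (cycleGraph (m+3)) (fun i : Fin (m+3) => i + (((m+3)/2 : ℕ) : Fin (m+3))) := by
  constructor
  · intro y
    exact ⟨y - (((m+3)/2 : ℕ) : Fin (m+3)), by ring⟩
  · intro i hi
    have h : (⟨i + 1, hi⟩ : Fin (m+3)) = ⟨i, Nat.lt_of_succ_lt hi⟩ + 1 := by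
      apply Fin.ext
      rw [Fin.add_def, fin_one_val]
      simpa using (Nat.mod_eq_of_lt hi).symm
    rw [h]
    simp only []
    rw [add_right_comm]
    exact adj_add_one _

lemma mdist_witness (m : ℕ) :
    mDist (cycleGraph (m+3)) (id : Fin (m+3) → Fin (m+3))
      (fun i : Fin (m+3) => i + (((m+3)/2 : ℕ) : Fin (m+3))) = (m+3)/2 := by
  have hset : {d | ∃ i : Fin (m+3), (cycleGraph (m+3)).dist (id i)
      (i + (((m+3)/2 : ℕ) : Fin (m+3))) = d} = {(m+3)/2} := by
    ext d
    simp only [Set.mem_setOf_eq, Set.mem_singleton_iff, id]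
    constructor
    · rintro ⟨i, rfl⟩; exact dist_shift m i
    · rintro rfl; exact ⟨0, dist_shift m 0⟩
  rw [mDist, hset, csInf_singleton]

lemma mdist_le (m : ℕ) {l : ℕ} (f g : Fin l → Fin (m+3)) (hf : Function.Surjective f) :
    mDist (cycleGraph (m+3)) f g ≤ (m+3)/2 := by
  obtain ⟨i0, -⟩ := hf 0
  exact le_trans (Nat.sInf_le ⟨i0, rfl⟩) (dist_le_half m _ _)

lemma strong_span (m : ℕ) : strongVertexSpan (cycleGraph (m+3)) = (m+3)/2 := by
  have hmem : (m+3)/2 ∈ {d | ∃ (l : ℕ) (f g : Fin l → Fin (m+3)),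
      IsLazyTrack (cycleGraph (m+3)) f ∧ IsLazyTrack (cycleGraph (m+3)) g ∧
      mDist (cycleGraph (m+3)) f g = d} := by
    refine ⟨m+3, id, fun i => i + (((m+3)/2 : ℕ) : Fin (m+3)),
      ⟨(track_id m).1, fun i hi => Or.inl ((track_id m).2 i hi)⟩,
      ⟨(track_shift m).1, fun i hi => Or.inl ((track_shift m).2 i hi)⟩, mdist_witness m⟩
  have hbdd : ∀ d ∈ {d | ∃ (l : ℕ) (f g : Fin l → Fin (m+3)),
      IsLazyTrack (cycleGraph (m+3)) f ∧ IsLazyTrack (cycleGraph (m+3)) g ∧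
      mDist (cycleGraph (m+3)) f g = d}, d ≤ (m+3)/2 := by
    rintro d ⟨l, f, g, hf, hg, rfl⟩
    exact mdist_le m f g hf.1
  exact le_antisymm (csSup_le ⟨_, hmem⟩ hbdd) (le_csSup ⟨(m+3)/2, hbdd⟩ hmem)

lemma direct_span (m : ℕ) : directVertexSpan (cycleGraph (m+3)) = (m+3)/2 := by
  have hmem : (m+3)/2 ∈ {d | ∃ (l : ℕ) (f g : Fin l → Fin (m+3)),
      IsTrack (cycleGraph (m+3)) f ∧ IsTrack (cycleGraph (m+3)) g ∧
      mDist (cycleGraph (m+3)) f g = d} :=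
    ⟨m+3, id, fun i => i + (((m+3)/2 : ℕ) : Fin (m+3)), track_id m, track_shift m,
      mdist_witness m⟩
  have hbdd : ∀ d ∈ {d | ∃ (l : ℕ) (f g : Fin l → Fin (m+3)),
      IsTrack (cycleGraph (m+3)) f ∧ IsTrack (cycleGraph (m+3)) g ∧
      mDist (cycleGraph (m+3)) f g = d}, d ≤ (m+3)/2 := by
    rintro d ⟨l, f, g, hf, hg, rfl⟩
    exact mdist_le m f g hf.1
  exact le_antisymm (csSup_le ⟨_, hmem⟩ hbdd) (le_csSup ⟨(m+3)/2, hbdd⟩ hmem)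

theorem stmt14 (n : ℕ) (hn : 3 ≤ n) :
    strongVertexL (SimpleGraph.cycleGraph n) = n ∧
      directVertexL (SimpleGraph.cycleGraph n) = n := by
  obtain ⟨m, rfl⟩ : ∃ m, n = m + 3 := ⟨n - 3, by omega⟩
  constructor
  · have hmem : m + 3 ∈ {l | ∃ f g : Fin l → Fin (m+3),
        IsLazyTrack (cycleGraph (m+3)) f ∧ IsLazyTrack (cycleGraph (m+3)) g ∧
        mDist (cycleGraph (m+3)) f g = strongVertexSpan (cycleGraph (m+3))} := by
      refine ⟨id, fun i => i + (((m+3)/2 : ℕ) : Fin (m+3)),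
        ⟨(track_id m).1, fun i hi => Or.inl ((track_id m).2 i hi)⟩,
        ⟨(track_shift m).1, fun i hi => Or.inl ((track_shift m).2 i hi)⟩, ?_⟩
      rw [strong_span]
      exact mdist_witness m
    refine le_antisymm (Nat.sInf_le hmem) (le_csInf ⟨_, hmem⟩ ?_)
    rintro l ⟨f, g, hf, -, -⟩
    have := Fintype.card_le_of_surjective f hf.1
    simpa using this
  · have hmem : m + 3 ∈ {l | ∃ f g : Fin l → Fin (m+3),
        IsTrack (cycleGraph (m+3)) f ∧ IsTrack (cycleGraph (m+3)) g ∧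
        mDist (cycleGraph (m+3)) f g = directVertexSpan (cycleGraph (m+3))} := by
      refine ⟨id, fun i => i + (((m+3)/2 : ℕ) : Fin (m+3)), track_id m, track_shift m, ?_⟩
      rw [direct_span]
      exact mdist_witness m
    refine le_antisymm (Nat.sInf_le hmem) (le_csInf ⟨_, hmem⟩ ?_)
    rintro l ⟨f, g, hf, -, -⟩
    have := Fintype.card_le_of_surjective f hf.1
    simpa using this
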